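/- Let p(·) be a measurable exponent with 0 < p₋ ≤ p₊ < ∞, b a slowly varying function, θ with 0 < θ < min{p₋, 1}, and (A_i)_{i∈ℕ} arbitrary measurable sets in a probability space. Then ‖∑_i χ_{A_i}‖_{p(·)}^θ γ_b^θ(‖∑_i χ_{A_i}‖_{p(·)}) ≲ ∑_i ‖χ_{A_i}‖_{p(·)}^θ γ_b^θ(‖χ_{A_i}‖_{p(·)}). -/

import Mathlib

open MeasureTheory Set ENNReal Filter Topology

noncomputable section

/-- A measurable function `b : [1,∞) → (0,∞)` is slowly varying if for every `ε > 0`,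
`t ^ ε * b t` is equivalent (up to multiplicative constants) to a nondecreasing function
and `t ^ (-ε) * b t` is equivalent to a nonincreasing function on `[1,∞)`. -/
def SlowlyVarying (b : ℝ → ℝ) : Prop :=
  (∀ t : ℝ, 1 ≤ t → 0 < b t) ∧
  ∀ ε : ℝ, 0 < ε →
    ((∃ g : ℝ → ℝ, MonotoneOn g (Set.Ici 1) ∧ ∃ c > (0:ℝ), ∃ C > (0:ℝ),
        ∀ t : ℝ, 1 ≤ t → c * g t ≤ t ^ ε * b t ∧ t ^ ε * b t ≤ C * g t) ∧
     (∃ g : ℝ → ℝ, AntitoneOn g (Set.Ici 1) ∧ ∃ c > (0:ℝ), ∃ C > (0:ℝ),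
        ∀ t : ℝ, 1 ≤ t → c * g t ≤ t ^ (-ε) * b t ∧ t ^ (-ε) * b t ≤ C * g t))

/-- `γ_b(t) = b (max {t, t⁻¹})` for `t > 0`. -/
def gammaB (b : ℝ → ℝ) (t : ℝ) : ℝ := b (max t t⁻¹)

variable {Ω : Type*} [MeasurableSpace Ω]

/-- The variable Lebesgue quasi-norm
`‖f‖_{p(·)} = inf {λ > 0 : ∫ (|f|/λ)^{p(·)} dμ ≤ 1}`. -/
def vLpNorm (μ : Measure Ω) (p : Ω → ℝ) (f : Ω → ℝ) : ℝ :=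
  sInf {lam : ℝ | 0 < lam ∧ ∫⁻ ω, ENNReal.ofReal ((|f ω| / lam) ^ p ω) ∂μ ≤ 1}

/-- `f ∈ L_{p(·)}` : the modular is finite for some `λ > 0`. -/
def MemVLp (μ : Measure Ω) (p : Ω → ℝ) (f : Ω → ℝ) : Prop :=
  ∃ lam > (0:ℝ), ∫⁻ ω, ENNReal.ofReal ((|f ω| / lam) ^ p ω) ∂μ ≤ 1

/-- `‖χ_A‖_{p(·)}`. -/
def chiNorm (μ : Measure Ω) (p : Ω → ℝ) (A : Set Ω) : ℝ :=
  vLpNorm μ p (A.indicator 1)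

/-- The variable Lorentz–Karamata quasi-norm `‖f‖_{p(·),q,b}` (with `q ∈ (0,∞]`). -/
def vLKNorm (μ : Measure Ω) (p : Ω → ℝ) (q : ℝ≥0∞) (b : ℝ → ℝ) (f : Ω → ℝ) : ℝ≥0∞ :=
  if q = ∞ then
    ⨆ t ∈ Set.Ioi (0:ℝ), ENNReal.ofReal
      (t * chiNorm μ p {ω | t < |f ω|} * gammaB b (chiNorm μ p {ω | t < |f ω|}))
  else
    (∫⁻ t in Set.Ioi (0:ℝ), ENNReal.ofReal
      ((t * chiNorm μ p {ω | t < |f ω|} * gammaB b (chiNorm μ p {ω | t < |f ω|})) ^ q.toReal / t))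
      ^ (1 / q.toReal)


namespace ChiAux

lemma lintegral_const_mul_le' (r : ℝ≥0∞) (hr : r ≠ ∞) (f : Ω → ℝ≥0∞) (ν : Measure Ω) :
    ∫⁻ ω, r * f ω ∂ν ≤ r * ∫⁻ ω, f ω ∂ν := by
  rcases eq_or_ne r 0 with rfl | hr0
  · simp
  · have h1 := lintegral_const_mul_le (μ := ν) r⁻¹ (fun ω => r * f ω)
    have h2 : (fun ω => r⁻¹ * (r * f ω)) = f := by
      funext ω; rw [← mul_assoc, ENNReal.inv_mul_cancel hr0 hr, one_mul]
    rw [show (∫⁻ ω, r⁻¹ * (r * f ω) ∂ν) = ∫⁻ ω, f ω ∂ν by rw [h2]] at h1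
    calc ∫⁻ ω, r * f ω ∂ν = r * (r⁻¹ * ∫⁻ ω, r * f ω ∂ν) := by
          rw [← mul_assoc, ENNReal.mul_inv_cancel hr0 hr, one_mul]
      _ ≤ r * ∫⁻ ω, f ω ∂ν := mul_le_mul_right h1 r

lemma card_rpow_le_sum_rpow_neg {ι : Type*} (F : Finset ι) (hF : F.Nonempty) (c : ι → ℝ)
    (hc : ∀ i ∈ F, 0 < c i) (hsum : ∑ i ∈ F, c i ≤ 1) {β : ℝ} (hβ : 0 ≤ β) :
    (F.card : ℝ) ^ (1 + β) ≤ ∑ i ∈ F, c i ^ (-β) := by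
  have hn : 0 < (F.card : ℝ) := by exact_mod_cast Finset.card_pos.2 hF
  set w : ι → ℝ := fun _ => 1 / (F.card : ℝ) with hw
  have hw0 : ∀ i ∈ F, 0 ≤ w i := fun i _ => by positivity
  have hw1 : ∑ i ∈ F, w i = 1 := by
    simp [hw, Finset.sum_const, hn.ne']
  have hG1 : ∏ i ∈ F, c i ^ w i ≤ 1 / (F.card : ℝ) := by
    calc ∏ i ∈ F, c i ^ w i ≤ ∑ i ∈ F, w i * c i :=
          Real.geom_mean_le_arith_mean_weighted F w c hw0 hw1 (fun i hi => (hc i hi).le)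
      _ = (1 / (F.card : ℝ)) * ∑ i ∈ F, c i := by rw [← Finset.mul_sum]
      _ ≤ (1 / (F.card : ℝ)) * 1 := by
          apply mul_le_mul_of_nonneg_left hsum (by positivity)
      _ = 1 / (F.card : ℝ) := mul_one _
  have hGpos : 0 < ∏ i ∈ F, c i ^ w i :=
    Finset.prod_pos fun i hi => Real.rpow_pos_of_pos (hc i hi) _
  have h2 : (∏ i ∈ F, c i ^ w i) ^ (-β) ≤ ∑ i ∈ F, w i * c i ^ (-β) := by
    have := Real.geom_mean_le_arith_mean_weighted F w (fun i => c i ^ (-β)) hw0 hw1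
      (fun i hi => (Real.rpow_pos_of_pos (hc i hi) _).le)
    calc (∏ i ∈ F, c i ^ w i) ^ (-β) = ∏ i ∈ F, (c i ^ (-β)) ^ w i := by
          rw [← Real.finset_prod_rpow F _
            (fun i hi => (Real.rpow_pos_of_pos (hc i hi) (w i)).le) (-β)]
          apply Finset.prod_congr rfl
          intro i hi
          rw [← Real.rpow_mul (hc i hi).le, ← Real.rpow_mul (hc i hi).le, mul_comm]
      _ ≤ _ := this
  have h3 : ((F.card : ℝ)) ^ β ≤ (∏ i ∈ F, c i ^ w i) ^ (-β) := by
    have := Real.rpow_le_rpow_of_nonpos hGpos hG1 (neg_nonpos.2 hβ)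
    calc ((F.card : ℝ)) ^ β = (1 / (F.card : ℝ)) ^ (-β) := by
          rw [one_div, Real.inv_rpow hn.le, Real.rpow_neg hn.le, inv_inv]
      _ ≤ _ := this
  calc (F.card : ℝ) ^ (1 + β) = (F.card : ℝ) * (F.card : ℝ) ^ β := by
        rw [Real.rpow_add hn, Real.rpow_one]
    _ ≤ (F.card : ℝ) * ((∏ i ∈ F, c i ^ w i) ^ (-β)) := by
        exact mul_le_mul_of_nonneg_left h3 hn.le
    _ ≤ (F.card : ℝ) * ∑ i ∈ F, w i * c i ^ (-β) := mul_le_mul_of_nonneg_left h2 hn.le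
    _ = ∑ i ∈ F, c i ^ (-β) := by
        simp only [hw]
        rw [← Finset.mul_sum, ← mul_assoc, mul_one_div_cancel hn.ne', one_mul]
lemma pointwiseP {ι : Type*} (F : Finset ι) (hF : F.Nonempty) {lam : ℝ} (hlam : 0 < lam)
    (lami : ι → ℝ) (hlami : ∀ i ∈ F, 0 < lami i)
    {η : ℝ} (hη0 : 0 < η) (hη1 : η ≤ 1)
    (hsum : ∑ i ∈ F, (lami i / lam) ^ η ≤ 1)
    {s : ℝ} (hs : η ≤ s) :
    ((F.card : ℝ) / lam) ^ s ≤ ∑ i ∈ F, (lami i / lam) ^ η * lami i ^ (-s) := by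
  have hs0 : 0 < s := lt_of_lt_of_le hη0 hs
  have hn1 : (1:ℝ) ≤ (F.card : ℝ) := by exact_mod_cast Finset.card_pos.2 hF
  have hn0 : (0:ℝ) < (F.card : ℝ) := lt_of_lt_of_le one_pos hn1
  set β := s / η - 1 with hβdef
  have hβ : 0 ≤ β := by
    have : (1:ℝ) ≤ s / η := (one_le_div hη0).2 hs
    simp only [hβdef]; linarith
  have key := card_rpow_le_sum_rpow_neg F hF (fun i => (lami i / lam) ^ η)
    (fun i hi => Real.rpow_pos_of_pos (div_pos (hlami i hi) hlam) η) hsum hβ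
  have h1β : 1 + β = s / η := by simp [hβdef]
  have hterm : ∀ i ∈ F, ((lami i / lam) ^ η) ^ (-β)
      = lam ^ s * ((lami i / lam) ^ η * lami i ^ (-s)) := by
    intro i hi
    have hd : (0:ℝ) < lami i / lam := div_pos (hlami i hi) hlam
    have he : η * (-β) = η + (-s) := by
      simp only [hβdef]; field_simp; ring
    rw [← Real.rpow_mul hd.le, he, Real.rpow_add hd]
    have hx : (lami i / lam) ^ (-s) = lami i ^ (-s) * lam ^ s := by
      rw [Real.div_rpow (hlami i hi).le hlam.le, Real.rpow_neg hlam.le]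
      field_simp
    rw [hx]; ring
  have hsumeq : ∑ i ∈ F, ((lami i / lam) ^ η) ^ (-β)
      = lam ^ s * ∑ i ∈ F, (lami i / lam) ^ η * lami i ^ (-s) := by
    rw [Finset.mul_sum]; exact Finset.sum_congr rfl hterm
  have hss : s ≤ s / η := by
    rw [le_div_iff₀ hη0]
    nlinarith
  calc ((F.card : ℝ) / lam) ^ s = (F.card : ℝ) ^ s / lam ^ s := Real.div_rpow hn0.le hlam.le _
    _ ≤ (F.card : ℝ) ^ (s / η) / lam ^ s := by
        exact (div_le_div_iff_of_pos_right (Real.rpow_pos_of_pos hlam s)).2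
          (Real.rpow_le_rpow_of_exponent_le hn1 hss)
    _ ≤ (lam ^ s * ∑ i ∈ F, (lami i / lam) ^ η * lami i ^ (-s)) / lam ^ s := by
        rw [← hsumeq]
        refine (div_le_div_iff_of_pos_right (Real.rpow_pos_of_pos hlam s)).2 ?_
        calc (F.card : ℝ) ^ (s / η) = (F.card : ℝ) ^ (1 + β) := by rw [h1β]
          _ ≤ _ := key
    _ = ∑ i ∈ F, (lami i / lam) ^ η * lami i ^ (-s) := by
        rw [mul_comm, mul_div_assoc, div_self (Real.rpow_pos_of_pos hlam s).ne', mul_one]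
lemma lintegral_comp_add_le (ν : Measure Ω) (p : Ω → ℝ) (hp : ∀ᵐ ω ∂ν, 0 < p ω)
    (ρ σ : ℝ → ℝ) (hρm : Monotone ρ) (hσm : Monotone σ) (hρc : Continuous ρ) (hσc : Continuous σ)
    (hρ0 : ∀ s, 0 ≤ ρ s) (hσ0 : ∀ s, 0 ≤ σ s) :
    ∫⁻ ω, ENNReal.ofReal (ρ (p ω) + σ (p ω)) ∂ν ≤
      (∫⁻ ω, ENNReal.ofReal (ρ (p ω)) ∂ν) + ∫⁻ ω, ENNReal.ofReal (σ (p ω)) ∂ν := by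
  conv_lhs => rw [lintegral]
  refine iSup₂_le fun g hg => ?_
  set χ : ℝ → ℝ := fun s => ρ s + σ s with hχ
  set m : ℝ≥0∞ → ℝ := fun y => sInf {s : ℝ | 0 ≤ s ∧ y ≤ ENNReal.ofReal (χ s)} with hm
  have key : ∀ ω, 0 < p ω →
      m (g ω) ≤ p ω ∧ g ω ≤ ENNReal.ofReal (χ (m (g ω))) := by
    intro ω hpω
    have hgω : g ω ≤ ENNReal.ofReal (χ (p ω)) := hg ω
    have hne : (p ω) ∈ {s : ℝ | 0 ≤ s ∧ g ω ≤ ENNReal.ofReal (χ s)} := ⟨hpω.le, hgω⟩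
    have hbdd : BddBelow {s : ℝ | 0 ≤ s ∧ g ω ≤ ENNReal.ofReal (χ s)} := ⟨0, fun x hx => hx.1⟩
    have hclosed : IsClosed {s : ℝ | 0 ≤ s ∧ g ω ≤ ENNReal.ofReal (χ s)} := by
      refine IsClosed.inter (isClosed_le continuous_const continuous_id) ?_
      have : {s : ℝ | g ω ≤ ENNReal.ofReal (χ s)} =
          (fun s : ℝ => ENNReal.ofReal (χ s)) ⁻¹' (Set.Ici (g ω)) := rfl
      show IsClosed {s : ℝ | g ω ≤ ENNReal.ofReal (χ s)}
      rw [this]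
      exact IsClosed.preimage (ENNReal.continuous_ofReal.comp (hρc.add hσc)) isClosed_Ici
    have hmem := hclosed.csInf_mem ⟨_, hne⟩ hbdd
    exact ⟨csInf_le hbdd hne, hmem.2⟩
  set h₁ := g.map (fun y => ENNReal.ofReal (ρ (m y))) with hh₁
  set h₂ := g.map (fun y => ENNReal.ofReal (σ (m y))) with hh₂
  have hle : ∀ᵐ ω ∂ν, g ω ≤ h₁ ω + h₂ ω := by
    filter_upwards [hp] with ω hpω
    have := (key ω hpω).2
    simpa [hh₁, hh₂, hχ, ENNReal.ofReal_add (hρ0 _) (hσ0 _)] using this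
  have h1le : ∀ᵐ ω ∂ν, h₁ ω ≤ ENNReal.ofReal (ρ (p ω)) := by
    filter_upwards [hp] with ω hpω
    simpa [hh₁] using ENNReal.ofReal_le_ofReal (hρm (key ω hpω).1)
  have h2le : ∀ᵐ ω ∂ν, h₂ ω ≤ ENNReal.ofReal (σ (p ω)) := by
    filter_upwards [hp] with ω hpω
    simpa [hh₂] using ENNReal.ofReal_le_ofReal (hσm (key ω hpω).1)
  calc g.lintegral ν = ∫⁻ ω, g ω ∂ν := (g.lintegral_eq_lintegral ν).symm
    _ ≤ ∫⁻ ω, (h₁ ω + h₂ ω) ∂ν := lintegral_mono_ae hle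
    _ = (∫⁻ ω, h₁ ω ∂ν) + ∫⁻ ω, h₂ ω ∂ν := lintegral_add_left h₁.measurable _
    _ ≤ _ := add_le_add (lintegral_mono_ae h1le) (lintegral_mono_ae h2le)

lemma lintegral_comp_sum_le (ν : Measure Ω) (p : Ω → ℝ) (hp : ∀ᵐ ω ∂ν, 0 < p ω)
    {ι : Type*} [DecidableEq ι] (F : Finset ι) (ρ : ι → ℝ → ℝ)
    (hm : ∀ i ∈ F, Monotone (ρ i)) (hc : ∀ i ∈ F, Continuous (ρ i))
    (h0 : ∀ i ∈ F, ∀ s, 0 ≤ ρ i s) :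
    ∫⁻ ω, ENNReal.ofReal (∑ i ∈ F, ρ i (p ω)) ∂ν
      ≤ ∑ i ∈ F, ∫⁻ ω, ENNReal.ofReal (ρ i (p ω)) ∂ν := by
  induction F using Finset.induction_on with
  | empty => simp
  | @insert a F' ha ih =>
    have hma := hm a (Finset.mem_insert_self a F')
    have hca := hc a (Finset.mem_insert_self a F')
    have h0a := h0 a (Finset.mem_insert_self a F')
    have hm' : ∀ i ∈ F', Monotone (ρ i) := fun i hi => hm i (Finset.mem_insert_of_mem hi)
    have hc' : ∀ i ∈ F', Continuous (ρ i) := fun i hi => hc i (Finset.mem_insert_of_mem hi)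
    have h0' : ∀ i ∈ F', ∀ s, 0 ≤ ρ i s := fun i hi => h0 i (Finset.mem_insert_of_mem hi)
    have hsm : Monotone (fun s => ∑ i ∈ F', ρ i s) :=
      fun x y hxy => Finset.sum_le_sum fun i hi => hm' i hi hxy
    have hsc : Continuous (fun s => ∑ i ∈ F', ρ i s) :=
      continuous_finset_sum F' fun i hi => hc' i hi
    have hs0 : ∀ s, 0 ≤ ∑ i ∈ F', ρ i s :=
      fun s => Finset.sum_nonneg fun i hi => h0' i hi s
    calc ∫⁻ ω, ENNReal.ofReal (∑ i ∈ insert a F', ρ i (p ω)) ∂ν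
        = ∫⁻ ω, ENNReal.ofReal (ρ a (p ω) + ∑ i ∈ F', ρ i (p ω)) ∂ν := by
          simp only [Finset.sum_insert ha]
      _ ≤ (∫⁻ ω, ENNReal.ofReal (ρ a (p ω)) ∂ν)
            + ∫⁻ ω, ENNReal.ofReal (∑ i ∈ F', ρ i (p ω)) ∂ν :=
          lintegral_comp_add_le ν p hp (ρ a) _ hma hsm hca hsc h0a hs0
      _ ≤ (∫⁻ ω, ENNReal.ofReal (ρ a (p ω)) ∂ν)
            + ∑ i ∈ F', ∫⁻ ω, ENNReal.ofReal (ρ i (p ω)) ∂ν :=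
          add_le_add_right (ih hm' hc' h0') _
      _ = ∑ i ∈ insert a F', ∫⁻ ω, ENNReal.ofReal (ρ i (p ω)) ∂ν := by
          rw [Finset.sum_insert ha]


def Adm (μ : Measure Ω) (p : Ω → ℝ) (f : Ω → ℝ) : Set ℝ :=
  {lam : ℝ | 0 < lam ∧ ∫⁻ ω, ENNReal.ofReal ((|f ω| / lam) ^ p ω) ∂μ ≤ 1}

lemma vLpNorm_eq (μ : Measure Ω) (p : Ω → ℝ) (f : Ω → ℝ) :
    vLpNorm μ p f = sInf (Adm μ p f) := rfl

lemma adm_bddBelow (μ : Measure Ω) (p : Ω → ℝ) (f : Ω → ℝ) : BddBelow (Adm μ p f) :=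
  ⟨0, fun _ hx => hx.1.le⟩

lemma vLpNorm_nonneg (μ : Measure Ω) (p : Ω → ℝ) (f : Ω → ℝ) : 0 ≤ vLpNorm μ p f :=
  Real.sInf_nonneg fun _ hx => hx.1.le

lemma adm_upward {μ : Measure Ω} {p : Ω → ℝ} (hp0 : ∀ᵐ ω ∂μ, 0 < p ω) (f : Ω → ℝ)
    {lam lam' : ℝ} (h : lam ∈ Adm μ p f) (hle : lam ≤ lam') : lam' ∈ Adm μ p f := by
  have hl := h.1
  refine ⟨lt_of_lt_of_le hl hle, le_trans (lintegral_mono_ae ?_) h.2⟩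
  filter_upwards [hp0] with ω hω
  apply ENNReal.ofReal_le_ofReal
  apply Real.rpow_le_rpow (div_nonneg (abs_nonneg _) (le_trans hl.le hle)) ?_ hω.le
  exact div_le_div_of_nonneg_left (abs_nonneg _) hl hle

lemma adm_one_mem {μ : Measure Ω} [IsProbabilityMeasure μ] {p : Ω → ℝ}
    (hp0 : ∀ᵐ ω ∂μ, 0 < p ω) {A : Set Ω} (hA : MeasurableSet A) :
    (1:ℝ) ∈ Adm μ p (A.indicator 1) := by
  refine ⟨one_pos, ?_⟩
  have heq : (fun ω => ENNReal.ofReal ((|A.indicator (1:Ω→ℝ) ω| / 1) ^ p ω)) =ᵐ[μ]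
      (fun ω => A.indicator (fun _ => (1:ℝ≥0∞)) ω) := by
    filter_upwards [hp0] with ω hω
    by_cases h : ω ∈ A
    · simp [Set.indicator_of_mem h]
    · simp [Set.indicator_of_notMem h, Real.zero_rpow hω.ne']
  rw [lintegral_congr_ae heq, lintegral_indicator hA]
  simp [prob_le_one]

lemma chiNorm_nonneg (μ : Measure Ω) (p : Ω → ℝ) (A : Set Ω) : 0 ≤ chiNorm μ p A :=
  vLpNorm_nonneg μ p _

lemma chiNorm_le_one {μ : Measure Ω} [IsProbabilityMeasure μ] {p : Ω → ℝ}
    (hp0 : ∀ᵐ ω ∂μ, 0 < p ω) {A : Set Ω} (hA : MeasurableSet A) : chiNorm μ p A ≤ 1 :=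
  csInf_le (adm_bddBelow μ p _) (adm_one_mem hp0 hA)

lemma exists_adm_lam {μ : Measure Ω} [IsProbabilityMeasure μ] {p : Ω → ℝ}
    (hp0 : ∀ᵐ ω ∂μ, 0 < p ω) {A : Set Ω} (hA : MeasurableSet A)
    {η δ : ℝ} (hη0 : 0 < η) (hδ : 0 < δ) :
    ∃ lam, lam ∈ Adm μ p (A.indicator 1) ∧ lam ≤ 1 ∧
      lam ^ η ≤ (chiNorm μ p A) ^ η + δ := by
  set t := chiNorm μ p A with ht
  have ht0 : 0 ≤ t := chiNorm_nonneg μ p A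
  have ht1 : t ≤ 1 := chiNorm_le_one hp0 hA
  set bet := (t ^ η + δ) ^ (1/η) with hbet
  have htη : 0 ≤ t ^ η := Real.rpow_nonneg ht0 η
  have hbpos : t < bet := by
    have h1 : t ^ η < t ^ η + δ := by linarith
    have := Real.rpow_lt_rpow htη h1 (by positivity : (0:ℝ) < 1/η)
    rwa [← Real.rpow_mul ht0, mul_one_div_cancel hη0.ne', Real.rpow_one] at this
  by_cases hcase : t < min 1 bet
  · obtain ⟨lam, hmem, hlt⟩ := exists_lt_of_csInf_lt ⟨1, adm_one_mem hp0 hA⟩ hcase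
    refine ⟨lam, hmem, (le_min_iff.1 hlt.le).1, ?_⟩
    have hlam0 : 0 ≤ lam := hmem.1.le
    have : lam ^ η ≤ bet ^ η :=
      Real.rpow_le_rpow hlam0 (le_trans hlt.le (min_le_right _ _)) hη0.le
    rwa [hbet, ← Real.rpow_mul (by positivity), one_div_mul_cancel hη0.ne',
      Real.rpow_one] at this
  · push_neg at hcase
    have h1 : min 1 bet = 1 := by
      rcases le_total (1:ℝ) bet with h | h
      · exact min_eq_left h
      · exfalso
        have : bet ≤ t := le_trans (min_eq_right h ▸ hcase) le_rfl
        exact absurd (lt_of_lt_of_le hbpos this) (lt_irrefl t)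
    have ht_eq : t = 1 := le_antisymm ht1 (h1 ▸ hcase)
    exact ⟨1, adm_one_mem hp0 hA, le_rfl, by rw [Real.one_rpow, ht_eq, Real.one_rpow]; linarith⟩

section N2
variable (μ : Measure Ω) [IsProbabilityMeasure μ] (p : Ω → ℝ)

lemma pat_measurable (A : ℕ → Set Ω) (hA : ∀ i, MeasurableSet (A i)) (F : Finset ℕ) :
    MeasurableSet {ω | ∀ i, ω ∈ A i ↔ i ∈ F} := by
  classical
  have : {ω | ∀ i, ω ∈ A i ↔ i ∈ F} = ⋂ i, (if i ∈ F then A i else (A i)ᶜ) := by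
    ext ω
    simp only [Set.mem_setOf_eq, Set.mem_iInter]
    constructor
    · intro h i
      by_cases hi : i ∈ F
      · simp [hi, (h i).2 hi]
      · simp only [hi, if_false, Set.mem_compl_iff]
        exact fun hmem => hi ((h i).1 hmem)
    · intro h i
      by_cases hi : i ∈ F
      · have := h i; simp [hi] at this; simp [hi, this]
      · have := h i; simp [hi] at this; simp [hi, this]
  rw [this]
  exact MeasurableSet.iInter fun i => by
    by_cases hi : i ∈ F
    · simp only [hi, if_true]; exact hA i
    · simp only [hi, if_false]; exact (hA i).compl

lemma pat_disjoint (A : ℕ → Set Ω) :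
    Pairwise (Function.onFun Disjoint fun F : Finset ℕ => {ω | ∀ i, ω ∈ A i ↔ i ∈ F}) := by
  intro F G hFG
  simp only [Function.onFun]
  rw [Set.disjoint_left]
  rintro ω hωF hωG
  exact hFG (Finset.ext fun i => (hωF i).symm.trans (hωG i))

lemma pat_fval (A : ℕ → Set Ω) (F : Finset ℕ) (ω : Ω) (hω : ω ∈ {ω | ∀ i, ω ∈ A i ↔ i ∈ F}) :
    ∑' i, (A i).indicator (1 : Ω → ℝ) ω = F.card := by
  classical
  have h1 : (fun i => (A i).indicator (1 : Ω → ℝ) ω) = fun i => if i ∈ F then (1:ℝ) else 0 := by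
    funext i
    by_cases hi : i ∈ F
    · rw [if_pos hi, Set.indicator_of_mem ((hω i).2 hi)]; rfl
    · rw [if_neg hi, Set.indicator_of_notMem (fun hmem => hi ((hω i).1 hmem))]
  rw [h1, tsum_eq_sum (s := F) (fun i hi => if_neg hi)]
  simp

lemma pat_cover (A : ℕ → Set Ω) (ω : Ω)
    (hω : ω ∉ ⋃ F : Finset ℕ, {ω | ∀ i, ω ∈ A i ↔ i ∈ F}) :
    ∑' i, (A i).indicator (1 : Ω → ℝ) ω = 0 := by
  classical
  by_cases hsumm : Summable (fun i => (A i).indicator (1 : Ω → ℝ) ω)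
  · exfalso
    obtain ⟨N, hN⟩ := (Metric.tendsto_atTop.1 hsumm.tendsto_atTop_zero) (1/2) (by norm_num)
    set F : Finset ℕ := (Finset.range N).filter (fun i => ω ∈ A i) with hF
    apply hω
    refine Set.mem_iUnion.2 ⟨F, fun i => ?_⟩
    constructor
    · intro hmem
      have hiN : i < N := by
        by_contra hge
        have := hN i (le_of_not_gt hge)
        rw [Set.indicator_of_mem hmem] at this
        simp at this
        norm_num at this
      exact Finset.mem_filter.2 ⟨Finset.mem_range.2 hiN, hmem⟩
    · intro hi
      exact (Finset.mem_filter.1 hi).2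
  · exact tsum_eq_zero_of_not_summable hsumm

end N2

lemma theta_triangle (μ : Measure Ω) [IsProbabilityMeasure μ] (p : Ω → ℝ) {pl : ℝ}
    (hpl : 0 < pl) (hp : ∀ᵐ ω ∂μ, pl ≤ p ω)
    {η : ℝ} (hη0 : 0 < η) (hη1 : η ≤ 1) (hηpl : η ≤ pl)
    (A : ℕ → Set Ω) (hA : ∀ i, MeasurableSet (A i)) :
    ENNReal.ofReal ((vLpNorm μ p fun ω => ∑' i, (A i).indicator (1:Ω→ℝ) ω) ^ η)
      ≤ ∑' i, ENNReal.ofReal ((chiNorm μ p (A i)) ^ η) := by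
  classical
  set f : Ω → ℝ := fun ω => ∑' i, (A i).indicator (1:Ω→ℝ) ω with hf
  set S := ∑' i, ENNReal.ofReal ((chiNorm μ p (A i)) ^ η) with hS
  rcases eq_or_ne S ⊤ with hStop | hStop
  · rw [hStop]; exact le_top
  have hp0 : ∀ᵐ ω ∂μ, 0 < p ω := by filter_upwards [hp] with ω hω; linarith
  have hT0 : 0 ≤ vLpNorm μ p f := vLpNorm_nonneg μ p f
  set L : ℝ := S.toReal ^ (1/η) with hL
  have hLnn : 0 ≤ L := Real.rpow_nonneg ENNReal.toReal_nonneg _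
  have hLη : L ^ η = S.toReal := by
    rw [hL, ← Real.rpow_mul ENNReal.toReal_nonneg, one_div_mul_cancel hη0.ne', Real.rpow_one]
  suffices hT : vLpNorm μ p f ≤ L by
    have h2 : vLpNorm μ p f ^ η ≤ L ^ η := Real.rpow_le_rpow hT0 hT hη0.le
    calc ENNReal.ofReal (vLpNorm μ p f ^ η) ≤ ENNReal.ofReal (S.toReal) :=
          ENNReal.ofReal_le_ofReal (hLη ▸ h2)
      _ = S := ENNReal.ofReal_toReal hStop
  refine le_of_forall_gt_imp_ge_of_dense fun lam hlam => ?_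
  have hlam0 : 0 < lam := lt_of_le_of_lt hLnn hlam
  set δ := lam ^ η - S.toReal with hδdef
  have hδ0 : 0 < δ := by
    have h1 : L ^ η < lam ^ η := Real.rpow_lt_rpow hLnn hlam hη0
    rw [hLη] at h1
    simp only [hδdef]; linarith
  -- choice of admissible approximations
  have hch : ∀ i : ℕ, ∃ l, l ∈ Adm μ p ((A i).indicator 1) ∧ l ≤ 1 ∧
      l ^ η ≤ (chiNorm μ p (A i)) ^ η + δ/2/2^i :=
    fun i => exists_adm_lam hp0 (hA i) hη0 (by positivity)
  choose lm hlm_mem hlm_le1 hlm_η using hch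
  have hlm_pos : ∀ i, 0 < lm i := fun i => (hlm_mem i).1
  -- finset control
  have hsumF : ∀ F : Finset ℕ, ∑ i ∈ F, (lm i / lam) ^ η ≤ 1 := by
    intro F
    have h1 : ∑ i ∈ F, (chiNorm μ p (A i)) ^ η ≤ S.toReal := by
      have h2 : ENNReal.ofReal (∑ i ∈ F, (chiNorm μ p (A i)) ^ η) ≤ S := by
        rw [ENNReal.ofReal_sum_of_nonneg (fun i _ => Real.rpow_nonneg (chiNorm_nonneg μ p _) η)]
        exact ENNReal.sum_le_tsum F
      exact (ENNReal.ofReal_le_iff_le_toReal hStop).1 h2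
    have hsm : Summable (fun i : ℕ => δ/2/2^i) := by
      have := summable_geometric_two.mul_left (δ/2)
      simpa [div_eq_mul_inv, one_div, inv_pow] using this
    have h2 : ∑ i ∈ F, (δ/2/2^i) ≤ δ := by
      calc ∑ i ∈ F, δ/2/2^i ≤ ∑' i, δ/2/2^i := by
            apply Summable.sum_le_tsum F (fun i _ => by positivity) hsm
        _ = δ := tsum_geometric_two' δ
      
    have h3 : ∑ i ∈ F, (lm i)^η ≤ lam ^ η := by
      calc ∑ i ∈ F, (lm i)^η ≤ ∑ i ∈ F, ((chiNorm μ p (A i))^η + δ/2/2^i) :=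
            Finset.sum_le_sum (fun i _ => hlm_η i)
        _ = (∑ i ∈ F, (chiNorm μ p (A i))^η) + ∑ i ∈ F, δ/2/2^i := Finset.sum_add_distrib
        _ ≤ S.toReal + δ := add_le_add h1 h2
        _ = lam ^ η := by simp only [hδdef]; ring
    have hlamη : 0 < lam ^ η := Real.rpow_pos_of_pos hlam0 η
    calc ∑ i ∈ F, (lm i / lam)^η = ∑ i ∈ F, (lm i)^η / lam^η :=
          Finset.sum_congr rfl fun i _ => Real.div_rpow (hlm_pos i).le hlam0.le η
      _ = (∑ i ∈ F, (lm i)^η)/lam^η := by rw [Finset.sum_div]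
      _ ≤ 1 := by rw [div_le_one hlamη]; exact h3
  -- the partition
  set Pat : Finset ℕ → Set Ω := fun F => {ω | ∀ i, ω ∈ A i ↔ i ∈ F} with hPat
  have hPatm : ∀ F, MeasurableSet (Pat F) := fun F => pat_measurable A hA F
  have hdisj : Pairwise (Function.onFun Disjoint Pat) := pat_disjoint A
  have hPatsub : ∀ F i, i ∈ F → Pat F ⊆ A i := fun F i hi ω hω => (hω i).2 hi
  set U := ⋃ F : Finset ℕ, Pat F with hU
  have hUm : MeasurableSet U := MeasurableSet.iUnion fun F => hPatm F
  set intg : Ω → ℝ≥0∞ := fun ω => ENNReal.ofReal ((|f ω| / lam) ^ p ω) with hintg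
  -- split the modular
  have hdec : μ.restrict U + μ.restrict Uᶜ = μ := Measure.restrict_add_restrict_compl hUm
  have hresU : μ.restrict U = Measure.sum (fun F : Finset ℕ => μ.restrict (Pat F)) :=
    Measure.restrict_iUnion hdisj hPatm
  have hsplit : ∫⁻ ω, intg ω ∂μ
      = (∑' F : Finset ℕ, ∫⁻ ω, intg ω ∂(μ.restrict (Pat F)))
        + ∫⁻ ω, intg ω ∂(μ.restrict Uᶜ) := by
    conv_lhs => rw [← hdec]
    rw [lintegral_add_measure, hresU, lintegral_sum_measure]
  have hcompl : ∫⁻ ω, intg ω ∂(μ.restrict Uᶜ) = 0 := by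
    have heq : intg =ᵐ[μ.restrict Uᶜ] (fun _ => 0) := by
      filter_upwards [ae_restrict_of_ae hp0, ae_restrict_mem hUm.compl] with ω hω hmem
      have hzero : f ω = 0 := pat_cover A ω hmem
      simp [hintg, hzero, Real.zero_rpow hω.ne']
    rw [lintegral_congr_ae heq, lintegral_zero]
  -- main per-F bound
  set I : Finset ℕ → ℕ → ℝ≥0∞ :=
    fun F i => ∫⁻ ω, ENNReal.ofReal ((lm i) ^ (-(p ω))) ∂(μ.restrict (Pat F)) with hI
  set c : ℕ → ℝ≥0∞ := fun i => ENNReal.ofReal ((lm i / lam)^η) with hc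
  have hperF : ∀ F : Finset ℕ, ∫⁻ ω, intg ω ∂(μ.restrict (Pat F))
      ≤ ∑' i : ℕ, (if i ∈ F then c i * I F i else 0) := by
    intro F
    rcases F.eq_empty_or_nonempty with rfl | hF
    · have heq : intg =ᵐ[μ.restrict (Pat ∅)] (fun _ => 0) := by
        filter_upwards [ae_restrict_of_ae hp0, ae_restrict_mem (hPatm ∅)] with ω hω hmem
        have hzero : f ω = 0 := by
          have := pat_fval A ∅ ω hmem
          simpa using this
        simp [hintg, hzero, Real.zero_rpow hω.ne']
      rw [lintegral_congr_ae heq, lintegral_zero]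
      exact zero_le
    · set ρ : ℕ → ℝ → ℝ := fun i s => (lm i / lam)^η * (lm i)^(-s) with hρ
      have hρm : ∀ i ∈ F, Monotone (ρ i) := by
        intro i _
        intro s₁ s₂ h
        apply mul_le_mul_of_nonneg_left ?_ (Real.rpow_nonneg (div_nonneg (hlm_pos i).le hlam0.le) η)
        exact Real.rpow_le_rpow_of_exponent_ge (hlm_pos i) (hlm_le1 i) (neg_le_neg h)
      have hρc : ∀ i ∈ F, Continuous (ρ i) := by
        intro i _
        have : (fun s => (lm i)^(-s)) = fun s => Real.exp (Real.log (lm i) * (-s)) := by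
          funext s; rw [Real.rpow_def_of_pos (hlm_pos i)]
        apply Continuous.mul continuous_const
        rw [this]
        exact Real.continuous_exp.comp (continuous_const.mul continuous_neg)
      have hρ0 : ∀ i ∈ F, ∀ s, 0 ≤ ρ i s :=
        fun i _ s => mul_nonneg (Real.rpow_nonneg (div_nonneg (hlm_pos i).le hlam0.le) η) (Real.rpow_nonneg (hlm_pos i).le _)
      have step1 : ∫⁻ ω, intg ω ∂(μ.restrict (Pat F))
          ≤ ∫⁻ ω, ENNReal.ofReal (∑ i ∈ F, ρ i (p ω)) ∂(μ.restrict (Pat F)) := by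
        apply lintegral_mono_ae
        filter_upwards [ae_restrict_of_ae hp, ae_restrict_mem (hPatm F)] with ω hpω hmem
        have hval : f ω = F.card := pat_fval A F ω hmem
        have habs : |f ω| = (F.card : ℝ) := by rw [hval]; exact abs_of_nonneg (by positivity)
        rw [hintg]
        simp only [habs]
        apply ENNReal.ofReal_le_ofReal
        exact pointwiseP F hF hlam0 lm (fun i _ => hlm_pos i) hη0 hη1 (hsumF F)
          (le_trans hηpl hpω)
      have step2 := lintegral_comp_sum_le (μ.restrict (Pat F)) p
        (ae_restrict_of_ae hp0) F ρ hρm hρc hρ0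
      have step3 : ∀ i ∈ F, ∫⁻ ω, ENNReal.ofReal (ρ i (p ω)) ∂(μ.restrict (Pat F))
          ≤ c i * I F i := by
        intro i _
        have heq : (fun ω => ENNReal.ofReal (ρ i (p ω)))
            = fun ω => c i * ENNReal.ofReal ((lm i) ^ (-(p ω))) := by
          funext ω
          rw [hρ, hc, ← ENNReal.ofReal_mul (Real.rpow_nonneg (div_nonneg (hlm_pos i).le hlam0.le) η)]
        rw [heq]
        exact lintegral_const_mul_le' (c i) ENNReal.ofReal_ne_top _ _
      have step4 : ∑ i ∈ F, (c i * I F i) = ∑' i : ℕ, (if i ∈ F then c i * I F i else 0) := by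
        rw [tsum_eq_sum (s := F) (fun i hi => if_neg hi)]
        exact (Finset.sum_congr rfl fun i hi => (if_pos hi)).symm
      calc ∫⁻ ω, intg ω ∂(μ.restrict (Pat F))
          ≤ ∫⁻ ω, ENNReal.ofReal (∑ i ∈ F, ρ i (p ω)) ∂(μ.restrict (Pat F)) := step1
        _ ≤ ∑ i ∈ F, ∫⁻ ω, ENNReal.ofReal (ρ i (p ω)) ∂(μ.restrict (Pat F)) := step2
        _ ≤ ∑ i ∈ F, (c i * I F i) := Finset.sum_le_sum step3
        _ = _ := step4
  -- step C : sum over F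
  have hIJ : ∀ i : ℕ, (∑' F : Finset ℕ, (if i ∈ F then I F i else 0))
      ≤ ∫⁻ ω, ENNReal.ofReal ((lm i) ^ (-(p ω))) ∂(μ.restrict (A i)) := by
    intro i
    set v : Ω → ℝ≥0∞ := fun ω => ENNReal.ofReal ((lm i) ^ (-(p ω))) with hv
    set νi : Measure Ω := Measure.sum
      (fun F : Finset ℕ => μ.restrict (if i ∈ F then Pat F else ∅)) with hνi
    have h1 : (∑' F : Finset ℕ, (if i ∈ F then I F i else 0)) = ∫⁻ ω, v ω ∂νi := by
      rw [hνi, lintegral_sum_measure]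
      apply tsum_congr
      intro F
      by_cases hiF : i ∈ F
      · simp only [hiF, if_true, hI, hv]
      · simp only [hiF, if_false, Measure.restrict_empty, lintegral_zero_measure]
    have h2 : νi ≤ μ.restrict (A i) := by
      refine Measure.le_iff.2 fun s hs => ?_
      rw [hνi, Measure.sum_apply _ hs, Measure.restrict_apply hs]
      have h3 : ∀ F : Finset ℕ, (μ.restrict (if i ∈ F then Pat F else ∅)) s
          = μ (s ∩ (if i ∈ F then Pat F else ∅)) := fun F => Measure.restrict_apply hs
      calc ∑' F : Finset ℕ, (μ.restrict (if i ∈ F then Pat F else ∅)) s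
          = ∑' F : Finset ℕ, μ (s ∩ (if i ∈ F then Pat F else ∅)) := tsum_congr h3
        _ = μ (⋃ F : Finset ℕ, s ∩ (if i ∈ F then Pat F else ∅)) := by
            rw [measure_iUnion ?_ ?_]
            · intro F G hFG
              refine Disjoint.mono (Set.inter_subset_right.trans ?_)
                (Set.inter_subset_right.trans ?_) (hdisj hFG)
              · by_cases hiF : i ∈ F
                · simp [hiF]
                · simp [hiF]
              · by_cases hiG : i ∈ G
                · simp [hiG]
                · simp [hiG]
            · intro F
              by_cases hiF : i ∈ F
              · simp only [hiF, if_true]; exact hs.inter (hPatm F)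
              · simp only [hiF, if_false]; simpa using hs.inter MeasurableSet.empty
        _ ≤ μ (s ∩ A i) := by
            apply measure_mono
            apply Set.iUnion_subset
            intro F
            by_cases hiF : i ∈ F
            · simp only [hiF, if_true]
              exact Set.inter_subset_inter_right s (hPatsub F i hiF)
            · simp [hiF]
    rw [h1]
    exact lintegral_mono' h2 le_rfl
  have hJ : ∀ i : ℕ, ∫⁻ ω, ENNReal.ofReal ((lm i) ^ (-(p ω))) ∂(μ.restrict (A i)) ≤ 1 := by
    intro i
    have h1 : ∫⁻ ω, ENNReal.ofReal ((lm i) ^ (-(p ω))) ∂(μ.restrict (A i))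
        = ∫⁻ ω, (A i).indicator (fun ω => ENNReal.ofReal ((lm i) ^ (-(p ω)))) ω ∂μ :=
      (lintegral_indicator (hA i) _).symm
    rw [h1]
    refine le_trans (lintegral_mono_ae ?_) (hlm_mem i).2
    filter_upwards [hp0] with ω hω
    by_cases hmem : ω ∈ A i
    · rw [Set.indicator_of_mem hmem]
      apply le_of_eq
      congr 1
      have h1 : |(A i).indicator (1:Ω→ℝ) ω| = 1 := by
        rw [Set.indicator_of_mem hmem]; simp
      rw [h1, one_div, Real.inv_rpow (hlm_pos i).le, ← Real.rpow_neg (hlm_pos i).le]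
    · rw [Set.indicator_of_notMem hmem]
      exact zero_le
  have hcsum : ∑' i : ℕ, c i ≤ 1 := by
    rw [ENNReal.tsum_eq_iSup_sum]
    refine iSup_le fun F => ?_
    calc ∑ i ∈ F, c i = ENNReal.ofReal (∑ i ∈ F, (lm i / lam)^η) :=
          (ENNReal.ofReal_sum_of_nonneg
            (fun i _ => Real.rpow_nonneg (div_nonneg (hlm_pos i).le hlam0.le) η)).symm
      _ ≤ ENNReal.ofReal 1 := ENNReal.ofReal_le_ofReal (hsumF F)
      _ = 1 := ENNReal.ofReal_one
  have hmod : ∫⁻ ω, intg ω ∂μ ≤ 1 := by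
    rw [hsplit, hcompl, add_zero]
    calc ∑' F : Finset ℕ, ∫⁻ ω, intg ω ∂(μ.restrict (Pat F))
        ≤ ∑' F : Finset ℕ, ∑' i : ℕ, (if i ∈ F then c i * I F i else 0) :=
          ENNReal.tsum_le_tsum hperF
      _ = ∑' i : ℕ, ∑' F : Finset ℕ, (if i ∈ F then c i * I F i else 0) := ENNReal.tsum_comm
      _ ≤ ∑' i : ℕ, c i := by
          apply ENNReal.tsum_le_tsum
          intro i
          have h1 : ∀ F : Finset ℕ, (if i ∈ F then c i * I F i else 0)
              = c i * (if i ∈ F then I F i else 0) := by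
            intro F; by_cases hiF : i ∈ F <;> simp [hiF]
          calc ∑' F : Finset ℕ, (if i ∈ F then c i * I F i else 0)
              = c i * ∑' F : Finset ℕ, (if i ∈ F then I F i else 0) := by
                rw [tsum_congr h1, ENNReal.tsum_mul_left]
            _ ≤ c i * 1 := mul_le_mul_right (le_trans (hIJ i) (hJ i)) (c i)
            _ = c i := mul_one _
      _ ≤ 1 := hcsum
  exact csInf_le (adm_bddBelow μ p f) ⟨hlam0, hmod⟩

end ChiAux

open ChiAux in
theorem chiNorm_tsum_upper (μ : Measure Ω) [IsProbabilityMeasure μ]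
    (p : Ω → ℝ) (pl pu : ℝ) (hpl : 0 < pl) (hple : pl ≤ pu)
    (hp : ∀ᵐ ω ∂μ, pl ≤ p ω ∧ p ω ≤ pu)
    (b : ℝ → ℝ) (hb : SlowlyVarying b)
    (θ : ℝ) (hθ0 : 0 < θ) (hθp : θ < pl) (hθ1 : θ < 1) :
    ∃ C > (0:ℝ), ∀ A : ℕ → Set Ω, (∀ i, MeasurableSet (A i)) →
      ENNReal.ofReal
          (vLpNorm μ p (fun ω => ∑' i, (A i).indicator (1 : Ω → ℝ) ω) ^ θ *
            gammaB b (vLpNorm μ p (fun ω => ∑' i, (A i).indicator (1 : Ω → ℝ) ω)) ^ θ) ≤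
        ENNReal.ofReal C *
          ∑' i, ENNReal.ofReal
            (chiNorm μ p (A i) ^ θ * gammaB b (chiNorm μ p (A i)) ^ θ) := by
  classical
  have hp₁ : ∀ᵐ ω ∂μ, pl ≤ p ω := by filter_upwards [hp] with ω hω; exact hω.1
  have hp0 : ∀ᵐ ω ∂μ, 0 < p ω := by filter_upwards [hp₁] with ω hω; linarith
  have hθm : θ < min pl 1 := lt_min hθp hθ1
  set η : ℝ := min ((θ + min pl 1)/2) (3*θ/2) with hηdef
  have hηθ : θ < η := lt_min (by linarith) (by linarith)
  have hηm : η < min pl 1 := lt_of_le_of_lt (min_le_left _ _) (by linarith)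
  have hη1 : η ≤ 1 := le_trans hηm.le (min_le_right pl 1)
  have hηpl : η ≤ pl := le_trans hηm.le (min_le_left pl 1)
  have hη0 : 0 < η := lt_trans hθ0 hηθ
  set δ : ℝ := η - θ with hδdef
  have hδ0 : 0 < δ := by simp only [hδdef]; linarith
  have hδθ : δ ≤ θ := by
    have : η ≤ 3*θ/2 := min_le_right _ _
    simp only [hδdef]; linarith
  set ε₀ : ℝ := δ / θ with hε₀def
  have hε₀0 : 0 < ε₀ := div_pos hδ0 hθ0
  have hε₀θ : ε₀ * θ = δ := div_mul_cancel₀ δ hθ0.ne'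
  obtain ⟨hbpos, hbsv⟩ := hb
  obtain ⟨⟨g, hgmono, c₁, hc₁, C₁, hC₁, hg⟩, ⟨h, hhanti, c₂, hc₂, C₂, hC₂, hh⟩⟩ := hbsv ε₀ hε₀0
  set D : ℝ := max (C₁/c₁) (C₂/c₂) with hD
  have hD0 : 0 < D := lt_of_lt_of_le (div_pos hC₁ hc₁) (le_max_left _ _)
  have Rdown : ∀ r r' : ℝ, 1 ≤ r' → r' ≤ r → b r' ≤ D * (r/r')^ε₀ * b r := by
    intro r r' hr' hler
    have h1r : 1 ≤ r := le_trans hr' hler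
    have hr'0 : (0:ℝ) < r' := lt_of_lt_of_le one_pos hr'
    have hr0 : (0:ℝ) < r := lt_of_lt_of_le one_pos h1r
    have e1 : r'^ε₀ * b r' ≤ (C₁/c₁) * (r^ε₀ * b r) := by
      calc r'^ε₀ * b r' ≤ C₁ * g r' := (hg r' hr').2
        _ ≤ C₁ * g r := mul_le_mul_of_nonneg_left
            (hgmono (Set.mem_Ici.2 hr') (Set.mem_Ici.2 h1r) hler) hC₁.le
        _ = (C₁/c₁) * (c₁ * g r) := by field_simp
        _ ≤ (C₁/c₁) * (r^ε₀ * b r) :=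
            mul_le_mul_of_nonneg_left (hg r h1r).1 (div_nonneg hC₁.le hc₁.le)
    have hrp : (0:ℝ) < r'^ε₀ := Real.rpow_pos_of_pos hr'0 _
    have e2 : b r' ≤ ((C₁/c₁) * (r^ε₀ * b r))/r'^ε₀ := by
      rw [le_div_iff₀ hrp]
      calc b r' * r'^ε₀ = r'^ε₀ * b r' := mul_comm _ _
        _ ≤ _ := e1
    calc b r' ≤ ((C₁/c₁) * (r^ε₀ * b r))/r'^ε₀ := e2
      _ = (C₁/c₁) * (r/r')^ε₀ * b r := by
          rw [Real.div_rpow hr0.le hr'0.le]; field_simp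
      _ ≤ D * (r/r')^ε₀ * b r := by
          apply mul_le_mul_of_nonneg_right ?_ (hbpos r h1r).le
          apply mul_le_mul_of_nonneg_right (le_max_left _ _)
            (Real.rpow_nonneg (div_nonneg hr0.le hr'0.le) _)
  have Rup : ∀ r r' : ℝ, 1 ≤ r' → r' ≤ r → b r ≤ D * (r/r')^ε₀ * b r' := by
    intro r r' hr' hler
    have h1r : 1 ≤ r := le_trans hr' hler
    have hr'0 : (0:ℝ) < r' := lt_of_lt_of_le one_pos hr'
    have hr0 : (0:ℝ) < r := lt_of_lt_of_le one_pos h1r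
    have e1 : r^(-ε₀) * b r ≤ (C₂/c₂) * (r'^(-ε₀) * b r') := by
      calc r^(-ε₀) * b r ≤ C₂ * h r := (hh r h1r).2
        _ ≤ C₂ * h r' := mul_le_mul_of_nonneg_left
            (hhanti (Set.mem_Ici.2 hr') (Set.mem_Ici.2 h1r) hler) hC₂.le
        _ = (C₂/c₂) * (c₂ * h r') := by field_simp
        _ ≤ (C₂/c₂) * (r'^(-ε₀) * b r') :=
            mul_le_mul_of_nonneg_left (hh r' hr').1 (div_nonneg hC₂.le hc₂.le)
    have hrp : (0:ℝ) < r^(-ε₀) := Real.rpow_pos_of_pos hr0 _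
    have e2 : b r ≤ ((C₂/c₂) * (r'^(-ε₀) * b r'))/r^(-ε₀) := by
      rw [le_div_iff₀ hrp]
      calc b r * r^(-ε₀) = r^(-ε₀) * b r := mul_comm _ _
        _ ≤ _ := e1
    calc b r ≤ ((C₂/c₂) * (r'^(-ε₀) * b r'))/r^(-ε₀) := e2
      _ = (C₂/c₂) * (r/r')^ε₀ * b r' := by
          rw [Real.div_rpow hr0.le hr'0.le, Real.rpow_neg hr0.le, Real.rpow_neg hr'0.le]
          field_simp
      _ ≤ D * (r/r')^ε₀ * b r' := by
          apply mul_le_mul_of_nonneg_right ?_ (hbpos r' hr').le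
          apply mul_le_mul_of_nonneg_right (le_max_right _ _)
            (Real.rpow_nonneg (div_nonneg hr0.le hr'0.le) _)
  refine ⟨max (D^θ) 1, lt_of_lt_of_le one_pos (le_max_right _ _), fun A hA => ?_⟩
  set t : ℕ → ℝ := fun i => chiNorm μ p (A i) with hteq
  set T : ℝ := vLpNorm μ p (fun ω => ∑' i, (A i).indicator (1:Ω→ℝ) ω) with hTeq
  set R := ∑' i, ENNReal.ofReal ((t i)^θ * gammaB b (t i)^θ) with hR
  have ht0 : ∀ i, 0 ≤ t i := fun i => chiNorm_nonneg μ p _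
  have ht1 : ∀ i, t i ≤ 1 := fun i => chiNorm_le_one hp0 (hA i)
  have hT0 : 0 ≤ T := vLpNorm_nonneg μ p _
  rcases eq_or_lt_of_le hT0 with hT0' | hTpos
  · rw [← hT0', Real.zero_rpow hθ0.ne', zero_mul, ENNReal.ofReal_zero]
    exact zero_le
  set MT : ℝ := max T T⁻¹ with hMTdef
  have hMT1 : 1 ≤ MT := by
    rcases le_total 1 T with h1 | h1
    · exact le_trans h1 (le_max_left T T⁻¹)
    · exact le_trans ((one_le_inv₀ hTpos).2 h1) (le_max_right T T⁻¹)
  have hMT0 : 0 < MT := lt_of_lt_of_le one_pos hMT1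
  have hTMT : 1 ≤ T * MT := by
    have h1 : T * T⁻¹ ≤ T * MT :=
      mul_le_mul_of_nonneg_left (le_max_right T T⁻¹) hTpos.le
    rwa [mul_inv_cancel₀ hTpos.ne'] at h1
  have hbMT : 0 < b MT := hbpos MT hMT1
  have pow_split : ∀ x B : ℝ, 0 ≤ x → 0 < B →
      (D * x^ε₀ * B)^θ = D^θ * (x^δ * B^θ) := by
    intro x B hx hB
    rw [Real.mul_rpow (mul_nonneg hD0.le (Real.rpow_nonneg hx _)) hB.le,
      Real.mul_rpow hD0.le (Real.rpow_nonneg hx _),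
      ← Real.rpow_mul hx, hε₀θ, mul_assoc]
  by_cases hex : ∃ j, T ≤ t j
  · -- Case 1 : T is below some t j
    obtain ⟨j, hj⟩ := hex
    have htj0 : 0 < t j := lt_of_lt_of_le hTpos hj
    have hT1 : T ≤ 1 := le_trans hj (ht1 j)
    have hTinv : T ≤ T⁻¹ := le_trans hT1 ((one_le_inv₀ hTpos).2 hT1)
    have hMTeq : MT = T⁻¹ := max_eq_right hTinv
    have hrj1 : 1 ≤ (t j)⁻¹ := (one_le_inv₀ htj0).2 (ht1 j)
    have hrle : (t j)⁻¹ ≤ T⁻¹ := by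
      gcongr
    have key := Rup T⁻¹ ((t j)⁻¹) hrj1 hrle
    have hdiv : T⁻¹/(t j)⁻¹ = t j / T := by field_simp
    rw [hdiv] at key
    have hbtj : 0 < b ((t j)⁻¹) := hbpos _ hrj1
    have hq : 0 ≤ t j / T := div_nonneg (ht0 j) hT0
    have key2 : (b T⁻¹)^θ ≤ D^θ * ((t j/T)^δ * (b ((t j)⁻¹))^θ) := by
      have h1 : (b T⁻¹)^θ ≤ (D * (t j/T)^ε₀ * b ((t j)⁻¹))^θ :=
        Real.rpow_le_rpow (hbpos _ (le_trans hrj1 hrle)).le key hθ0.le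
      rwa [pow_split _ _ hq hbtj] at h1
    have main : T^θ * (b MT)^θ ≤ D^θ * ((t j)^θ * (b ((t j)⁻¹))^θ) := by
      rw [hMTeq]
      have hTθn : 0 ≤ T^θ := Real.rpow_nonneg hT0 θ
      calc T^θ * (b T⁻¹)^θ ≤ T^θ * (D^θ * ((t j/T)^δ * (b ((t j)⁻¹))^θ)) :=
            mul_le_mul_of_nonneg_left key2 hTθn
        _ = D^θ * ((T^(θ-δ) * (t j)^δ) * (b ((t j)⁻¹))^θ) := by
            have e5 : T^(θ-δ) = T^θ/T^δ := Real.rpow_sub hTpos θ δ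
            rw [Real.div_rpow (ht0 j) hT0, e5]
            ring
        _ ≤ D^θ * (((t j)^(θ-δ) * (t j)^δ) * (b ((t j)⁻¹))^θ) := by
            have h2 : T^(θ-δ) ≤ (t j)^(θ-δ) := Real.rpow_le_rpow hT0 hj (by linarith)
            have h3 := mul_le_mul_of_nonneg_right (mul_le_mul_of_nonneg_right h2
              (Real.rpow_nonneg (ht0 j) δ)) (Real.rpow_nonneg hbtj.le θ)
            exact mul_le_mul_of_nonneg_left h3 (Real.rpow_nonneg hD0.le θ)
        _ = D^θ * ((t j)^θ * (b ((t j)⁻¹))^θ) := by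
            have h4 : (t j)^(θ-δ) * (t j)^δ = (t j)^θ := by
              rw [← Real.rpow_add htj0]; congr 1; ring
            rw [h4]
    have hmaxj : max (t j) (t j)⁻¹ = (t j)⁻¹ := max_eq_right (le_trans (ht1 j) hrj1)
    calc ENNReal.ofReal (T^θ * gammaB b T ^ θ)
        ≤ ENNReal.ofReal (D^θ * ((t j)^θ * gammaB b (t j) ^ θ)) := by
          apply ENNReal.ofReal_le_ofReal
          simp only [gammaB, hmaxj]
          rw [← hMTdef]
          exact main
      _ = ENNReal.ofReal (D^θ) * ENNReal.ofReal ((t j)^θ * gammaB b (t j) ^ θ) :=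
          ENNReal.ofReal_mul (Real.rpow_nonneg hD0.le θ)
      _ ≤ ENNReal.ofReal (max (D^θ) 1) * R :=
          mul_le_mul' (ENNReal.ofReal_le_ofReal (le_max_left _ _)) (ENNReal.le_tsum j)
  · -- Case 2 : all t i < T
    push_neg at hex
    have hN2 := theta_triangle μ p hpl hp₁ hη0 hη1 hηpl A hA
    set κ : ℝ := D^θ * T^δ / (b MT)^θ with hκdef
    have hBθ : 0 < (b MT)^θ := Real.rpow_pos_of_pos hbMT θ
    have hκ0 : 0 ≤ κ := div_nonneg
      (mul_nonneg (Real.rpow_nonneg hD0.le θ) (Real.rpow_nonneg hT0 δ)) hBθ.le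
    have claim : ∀ i, ENNReal.ofReal ((t i)^η)
        ≤ ENNReal.ofReal κ * ENNReal.ofReal ((t i)^θ * gammaB b (t i)^θ) := by
      intro i
      rcases eq_or_lt_of_le (ht0 i) with hti0 | hti0
      · rw [← hti0, Real.zero_rpow hη0.ne', ENNReal.ofReal_zero]
        exact zero_le
      · have hti1 := ht1 i
        have hr1 : 1 ≤ (t i)⁻¹ := (one_le_inv₀ hti0).2 hti1
        have hmaxi : max (t i) (t i)⁻¹ = (t i)⁻¹ := max_eq_right (le_trans hti1 hr1)
        have hbr : 0 < b ((t i)⁻¹) := hbpos _ hr1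
        have hTt : 0 ≤ T / t i := div_nonneg hT0 (ht0 i)
        have claim2 : b MT ≤ D * (T/(t i))^ε₀ * b ((t i)⁻¹) := by
          rcases le_total MT ((t i)⁻¹) with hcase | hcase
          · have h6 := Rdown ((t i)⁻¹) MT hMT1 hcase
            have hle2 : (t i)⁻¹/MT ≤ T/(t i) := by
              rw [div_le_div_iff₀ hMT0 hti0, inv_mul_cancel₀ hti0.ne']
              exact hTMT
            calc b MT ≤ D * ((t i)⁻¹/MT)^ε₀ * b ((t i)⁻¹) := h6
              _ ≤ D * (T/(t i))^ε₀ * b ((t i)⁻¹) := by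
                  apply mul_le_mul_of_nonneg_right ?_ hbr.le
                  exact mul_le_mul_of_nonneg_left
                    (Real.rpow_le_rpow (div_nonneg (inv_pos.2 hti0).le hMT0.le) hle2 hε₀0.le)
                    hD0.le
          · have h6 := Rup MT ((t i)⁻¹) hr1 hcase
            have hle2 : MT/(t i)⁻¹ ≤ T/(t i) := by
              rw [div_inv_eq_mul, le_div_iff₀ hti0]
              rcases le_total 1 T with h1T | h1T
              · have hMTT : MT = T := max_eq_left (le_trans (inv_le_one_of_one_le₀ h1T) h1T)
                rw [hMTT]
                have h10 : 0 ≤ T * ((1 - t i) * (1 + t i)) :=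
                  mul_nonneg hTpos.le
                    (mul_nonneg (sub_nonneg.2 hti1) (by linarith))
                have h9 : T * ((1 - t i) * (1 + t i)) = T - T * t i * t i := by ring
                rw [h9] at h10
                linarith
              · have hTinv : T ≤ T⁻¹ := le_trans h1T ((one_le_inv₀ hTpos).2 h1T)
                have hMTT : MT = T⁻¹ := max_eq_right hTinv
                rw [hMTT]
                have h7 : T⁻¹ * T = 1 := inv_mul_cancel₀ hTpos.ne'
                have h8 : T⁻¹ * T * T = T := by rw [h7]; ring
                have h10 : 0 ≤ T⁻¹ * ((T - t i) * (T + t i)) :=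
                  mul_nonneg (inv_pos.2 hTpos).le
                    (mul_nonneg (sub_nonneg.2 (hex i).le) (by linarith))
                have h9 : T⁻¹ * ((T - t i) * (T + t i))
                    = T⁻¹ * T * T - T⁻¹ * t i * t i := by ring
                rw [h9] at h10
                linarith
            calc b MT ≤ D * (MT/(t i)⁻¹)^ε₀ * b ((t i)⁻¹) := h6
              _ ≤ D * (T/(t i))^ε₀ * b ((t i)⁻¹) := by
                  apply mul_le_mul_of_nonneg_right ?_ hbr.le
                  exact mul_le_mul_of_nonneg_left
                    (Real.rpow_le_rpow (div_nonneg hMT0.le (inv_pos.2 hti0).le) hle2 hε₀0.le)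
                    hD0.le
        have hclaim2θ : (b MT)^θ ≤ D^θ * ((T/(t i))^δ * (b ((t i)⁻¹))^θ) := by
          have h1 : (b MT)^θ ≤ (D * (T/(t i))^ε₀ * b ((t i)⁻¹))^θ :=
            Real.rpow_le_rpow hbMT.le claim2 hθ0.le
          rwa [pow_split _ _ hTt hbr] at h1
        have h5 : (t i)^η * (b MT)^θ ≤ D^θ * T^δ * ((t i)^θ * (b ((t i)⁻¹))^θ) := by
          calc (t i)^η * (b MT)^θ
              ≤ (t i)^η * (D^θ * ((T/(t i))^δ * (b ((t i)⁻¹))^θ)) :=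
                mul_le_mul_of_nonneg_left hclaim2θ (Real.rpow_nonneg (ht0 i) η)
            _ = D^θ * T^δ * ((t i)^θ * (b ((t i)⁻¹))^θ) := by
                have e1 : (t i)^η = (t i)^θ * (t i)^δ := by
                  rw [← Real.rpow_add hti0]; congr 1; simp only [hδdef]; ring
                have e2 : (T/(t i))^δ = T^δ / (t i)^δ := Real.div_rpow hT0 (ht0 i) δ
                have htiδ : (0:ℝ) < (t i)^δ := Real.rpow_pos_of_pos hti0 δ
                rw [e1, e2]
                field_simp
        have hreal : (t i)^η ≤ κ * ((t i)^θ * (b ((t i)⁻¹))^θ) := by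
          rw [hκdef, div_mul_eq_mul_div, le_div_iff₀ hBθ]
          linear_combination h5
        calc ENNReal.ofReal ((t i)^η)
            ≤ ENNReal.ofReal (κ * ((t i)^θ * (b ((t i)⁻¹))^θ)) :=
              ENNReal.ofReal_le_ofReal hreal
          _ = ENNReal.ofReal κ * ENNReal.ofReal ((t i)^θ * gammaB b (t i)^θ) := by
              rw [ENNReal.ofReal_mul hκ0]
              congr 2
              simp only [gammaB, hmaxi]
    have hsum : ENNReal.ofReal (T^η) ≤ ENNReal.ofReal κ * R := by
      refine le_trans hN2 ?_
      rw [hR, ← ENNReal.tsum_mul_left]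
      exact ENNReal.tsum_le_tsum claim
    by_cases hRtop : R = ⊤
    · rw [hRtop, ENNReal.mul_top]
      · exact le_top
      · simp only [ne_eq, ENNReal.ofReal_eq_zero, not_le]
        exact lt_of_lt_of_le one_pos (le_max_right _ _)
    · have hRr : ENNReal.ofReal R.toReal = R := ENNReal.ofReal_toReal hRtop
      have hineq : T^η ≤ κ * R.toReal := by
        rw [← hRr, ← ENNReal.ofReal_mul hκ0] at hsum
        exact (ENNReal.ofReal_le_ofReal_iff
          (mul_nonneg hκ0 ENNReal.toReal_nonneg)).1 hsum
      have hfinal : T^θ * (b MT)^θ ≤ D^θ * R.toReal := by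
        have hTδ : 0 < T^δ := Real.rpow_pos_of_pos hTpos δ
        have hTθ : T^η = T^θ * T^δ := by
          rw [← Real.rpow_add hTpos]; congr 1; simp only [hδdef]; ring
        rw [hTθ, hκdef] at hineq
        have h2 : T^θ * T^δ * (b MT)^θ ≤ D^θ * T^δ * R.toReal := by
          have h3 := mul_le_mul_of_nonneg_right hineq hBθ.le
          calc T^θ*T^δ*(b MT)^θ ≤ (D^θ * T^δ/(b MT)^θ) * R.toReal * (b MT)^θ := h3
            _ = D^θ * T^δ * R.toReal := by field_simp
        have h4 : (T^θ * (b MT)^θ) * T^δ ≤ (D^θ * R.toReal) * T^δ := by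
          linear_combination h2
        exact le_of_mul_le_mul_right h4 hTδ
      calc ENNReal.ofReal (T^θ * gammaB b T ^ θ)
          ≤ ENNReal.ofReal (D^θ * R.toReal) := by
            apply ENNReal.ofReal_le_ofReal
            have : gammaB b T = b MT := by simp only [gammaB, ← hMTdef]
            rw [this]
            exact hfinal
        _ = ENNReal.ofReal (D^θ) * ENNReal.ofReal R.toReal :=
            ENNReal.ofReal_mul (Real.rpow_nonneg hD0.le θ)
        _ ≤ ENNReal.ofReal (max (D^θ) 1) * R := by
            rw [hRr]
            exact mul_le_mul' (ENNReal.ofReal_le_ofReal (le_max_left _ _)) le_rfl
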